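/- If m_1,...,m_r are the minimal generators of a monomial ideal in d variables (i.e., the exponent vectors form an antichain), then every face I of the Scarf complex Δ_M satisfies |I| ≤ d, i.e., dim Δ_M ≤ d − 1. -/

import Mathlib

/-- If the exponent vectors of the minimal generators form an antichain in
`ℕ^d`, then every face of the Scarf complex has at most `d` elements. -/
theorem stmt_12 {d r : ℕ} (α : Fin r → (Fin d → ℕ))
    (hanti : ∀ i j, i ≠ j → ¬ α i ≤ α j)
    (mI : Finset (Fin r) → (Fin d → ℕ))
    (hmI : ∀ I, mI I = fun k => I.sup (fun i => α i k)) :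
    ∀ I : Finset (Fin r),
      (∀ J : Finset (Fin r), mI J = mI I → J = I) → I.card ≤ d := by
  intro I hI
  have key : ∀ i ∈ I, ∃ k : Fin d, ∀ j ∈ I, j ≠ i → α j k < α i k := by
    intro i hi
    have hne : mI (I.erase i) ≠ mI I := by
      intro h
      have hss := Finset.erase_ssubset hi
      rw [hI _ h] at hss
      exact hss.false
    rw [hmI, hmI] at hne
    have hex : ∃ k, (I.erase i).sup (fun j => α j k) ≠ I.sup (fun j => α j k) := by
      by_contra h
      push_neg at h
      exact hne (funext h)
    obtain ⟨k, hk⟩ := hex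
    refine ⟨k, fun j hj hji => ?_⟩
    have hle : (I.erase i).sup (fun j => α j k) ≤ I.sup (fun j => α j k) :=
      Finset.sup_mono (Finset.erase_subset _ _)
    have hlt : (I.erase i).sup (fun j => α j k) < I.sup (fun j => α j k) :=
      lt_of_le_of_ne hle hk
    have hj' : α j k ≤ (I.erase i).sup (fun j => α j k) :=
      Finset.le_sup (f := fun j => α j k) (Finset.mem_erase.mpr ⟨hji, hj⟩)
    have heq : I.sup (fun j => α j k) = α i k ⊔ (I.erase i).sup (fun j => α j k) := by
      conv_lhs => rw [← Finset.insert_erase hi]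
      rw [Finset.sup_insert]
    rcases le_or_gt (α i k) ((I.erase i).sup fun j => α j k) with h | h
    · rw [heq, Nat.max_eq_right h] at hlt
      omega
    · omega
  rcases I.eq_empty_or_nonempty with rfl | ⟨i0, hi0⟩
  · simp
  · obtain ⟨k0, _⟩ := key i0 hi0
    classical
    set f : Fin r → Fin d := fun i => if h : i ∈ I then (key i h).choose else k0 with hf
    have hspec : ∀ i ∈ I, ∀ j ∈ I, j ≠ i → α j (f i) < α i (f i) := by
      intro i hi
      simp only [hf, dif_pos hi]
      exact (key i hi).choose_spec
    calc I.card ≤ (Finset.univ : Finset (Fin d)).card := by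
          apply Finset.card_le_card_of_injOn f (fun _ _ => Finset.mem_univ _)
          intro i hi j hj hij
          by_contra hne
          have h1 := hspec i hi j hj (Ne.symm hne)
          have h2 := hspec j hj i hi hne
          rw [hij] at h1
          omega
      _ = d := Finset.card_univ.trans (Fintype.card_fin d)
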